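/- For every real number s > 0 and every integer k ≥ 2, one has ((k^2 - 1)^(2s)) / ((k+1)^(2s) - (k-1)^(2s)) ≤ k^(2s+1) / (2s). -/

import Mathlib

/-- For every real `s > 0` and every integer `k ≥ 2`,
`((k² - 1)^(2s)) / ((k+1)^(2s) - (k-1)^(2s)) ≤ k^(2s+1) / (2s)`. -/
theorem stmt_0 (s : ℝ) (hs : 0 < s) (k : ℤ) (hk : 2 ≤ k) :
    ((k : ℝ) ^ 2 - 1) ^ (2 * s) / (((k : ℝ) + 1) ^ (2 * s) - ((k : ℝ) - 1) ^ (2 * s))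
      ≤ (k : ℝ) ^ (2 * s + 1) / (2 * s) := by
  have hk2 : (2 : ℝ) ≤ (k : ℝ) := by exact_mod_cast hk
  set K : ℝ := (k : ℝ) with hKdef
  have hK : 0 < K := by linarith
  have ha : (0 : ℝ) < K - 1 := by linarith
  have hb : (0 : ℝ) < K + 1 := by linarith
  have hs2 : 0 < 2 * s := by linarith
  -- key lemma: (K-1)^(2s) * (K + 2s) ≤ K^(2s+1)
  have hL1 : (K - 1) ^ (2 * s) * (K + 2 * s) ≤ K ^ (2 * s + 1) := by
    have hK2s : 0 < K + 2 * s := by linarith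
    rw [Real.rpow_def_of_pos ha, Real.rpow_def_of_pos hK, ← Real.exp_log hK2s,
      ← Real.exp_add, Real.exp_le_exp]
    have h1 : Real.log ((K - 1) / K) ≤ (K - 1) / K - 1 :=
      Real.log_le_sub_one_of_pos (by positivity)
    rw [Real.log_div (by linarith) (by linarith)] at h1
    have h1' : Real.log (K - 1) ≤ Real.log K - 1 / K := by
      have : (K - 1) / K - 1 = -(1 / K) := by field_simp; ring
      rw [this] at h1; linarith
    have h2 : Real.log ((K + 2 * s) / K) ≤ (K + 2 * s) / K - 1 :=
      Real.log_le_sub_one_of_pos (by positivity)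
    rw [Real.log_div (by linarith) (by linarith)] at h2
    have h2' : Real.log (K + 2 * s) ≤ Real.log K + 2 * s / K := by
      have : (K + 2 * s) / K - 1 = 2 * s / K := by field_simp; ring
      rw [this] at h2; linarith
    have h := mul_le_mul_of_nonneg_right h1' hs2.le
    have e : 2 * s / K = 1 / K * (2 * s) := by ring
    rw [e] at h2'
    nlinarith [h]
  have hA : 0 < (K - 1) ^ (2 * s) := Real.rpow_pos_of_pos ha _
  have hB : 0 < (K + 1) ^ (2 * s) := Real.rpow_pos_of_pos hb _
  have hC : 0 < K ^ (2 * s) := Real.rpow_pos_of_pos hK _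
  have hCB : K ^ (2 * s) ≤ (K + 1) ^ (2 * s) :=
    Real.rpow_le_rpow hK.le (by linarith) hs2.le
  have hAB : (K - 1) ^ (2 * s) < (K + 1) ^ (2 * s) :=
    Real.rpow_lt_rpow ha.le (by linarith) hs2
  have hKs1 : K ^ (2 * s + 1) = K ^ (2 * s) * K := by
    rw [Real.rpow_add hK, Real.rpow_one]
  have hsq : K ^ 2 - 1 = (K - 1) * (K + 1) := by ring
  rw [div_le_div_iff₀ (by linarith) hs2, hsq, Real.mul_rpow ha.le hb.le, hKs1]
  set A := (K - 1) ^ (2 * s)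
  set B := (K + 1) ^ (2 * s)
  set C := K ^ (2 * s)
  -- goal: A * B * (2 * s) ≤ C * K * (B - A)
  rw [hKs1] at hL1
  nlinarith [mul_le_mul_of_nonneg_right hL1 hB.le,
    mul_le_mul_of_nonneg_left hCB (mul_pos hA hK).le]
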